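/- Let (V, F) be a rank-1 F-isocrystal on F_q (q = p^d) with coefficients in a p-adic local field L, i.e., V is free of rank 1 over Q_q ⊗_{Q_p} L and F is a (σ⊗1)-semilinear bijection. Let λ ∈ L^* be the eigenvalue of the L-linear map F^d. If λ lies in a subfield K ⊆ L and λ is a norm from (Q_q ⊗_{Q_p} K)^* to K^*, then (V, F) descends to an F-isocrystal with coefficients in K. -/

import Mathlib

open TensorProduct

/-- Hilbert 90 for a commutative artinian algebra over an infinite field. -/
theorem hilbert90_artinian {F₀ M : Type*} [Field F₀] [Infinite F₀] [CommRing M]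
    [Algebra F₀ M] [IsArtinianRing M] [Nontrivial M]
    (d : ℕ) (hd : 0 < d) (τ : M ≃ₐ[F₀] M)
    (hτd : τ ^ d = 1)
    (hdist : ∀ k, 0 < k → k < d → ∀ 𝔪 : Ideal M, 𝔪.IsMaximal →
      ∃ x : M, (τ ^ k) x - x ∉ 𝔪)
    (g : Mˣ) (hg : ∏ i ∈ Finset.range d, (τ ^ i) (g : M) = 1) :
    ∃ y : Mˣ, (g : M) * τ (y : M) = (y : M) := by
  classical
  -- the cocycle `c i = g · τ g ⋯ τ^{i-1} g`
  set cu : ℕ → Mˣ := fun i =>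
    ∏ j ∈ Finset.range i, Units.map ((τ ^ j : M ≃ₐ[F₀] M) : M →* M) g with hcu
  set c : ℕ → M := fun i => (cu i : M) with hcdef
  have hcoe : ∀ i, c i = ∏ j ∈ Finset.range i, (τ ^ j) (g : M) := by
    intro i
    rw [hcdef, hcu]
    simp only
    rw [← Units.coeHom_apply, map_prod]
    rfl
  have hc0 : c 0 = 1 := by simp [hcoe]
  have hcd : c d = 1 := by rw [hcoe]; exact hg
  have hcunit : ∀ i, IsUnit (c i) := fun i => (cu i).isUnit
  have hcrec : ∀ i, (g : M) * τ (c i) = c (i + 1) := by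
    intro i
    have hτc : τ (c i) = ∏ j ∈ Finset.range i, (τ ^ (j + 1)) (g : M) := by
      rw [hcoe, map_prod]
      refine Finset.prod_congr rfl fun j _ => ?_
      rw [← AlgEquiv.mul_apply, ← pow_succ']
    rw [hτc, hcoe, Finset.prod_range_succ']
    rw [pow_zero, AlgEquiv.one_apply, mul_comm]
  -- the linear map `P t = ∑ c i · τ^i t`
  set P : M →ₗ[F₀] M :=
    ∑ i ∈ Finset.range d,
      (LinearMap.mulLeft F₀ (c i)) ∘ₗ ((τ ^ i : M ≃ₐ[F₀] M).toLinearMap) with hP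
  have hPapply : ∀ t : M, P t = ∑ i ∈ Finset.range d, c i * (τ ^ i) t := by
    intro t
    rw [hP]
    simp [LinearMap.sum_apply]
  -- `g · τ (P t) = P t`
  have hfix : ∀ t : M, (g : M) * τ (P t) = P t := by
    intro t
    rw [hPapply t, map_sum, Finset.mul_sum]
    have h1 : ∀ i, (g : M) * τ (c i * (τ ^ i) t) = c (i + 1) * (τ ^ (i + 1)) t := by
      intro i
      rw [map_mul, ← mul_assoc, hcrec, ← AlgEquiv.mul_apply, ← pow_succ']
    calc ∑ i ∈ Finset.range d, (g : M) * τ (c i * (τ ^ i) t)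
        = ∑ i ∈ Finset.range d, c (i + 1) * (τ ^ (i + 1)) t :=
          Finset.sum_congr rfl fun i _ => h1 i
      _ = ∑ i ∈ Finset.range d, c i * (τ ^ i) t := by
          have h2 := Finset.sum_range_succ' (fun i => c i * (τ ^ i) t) d
          have h3 := Finset.sum_range_succ (fun i => c i * (τ ^ i) t) d
          have h4 : c d * (τ ^ d) t = c 0 * (τ ^ 0) t := by
            rw [hcd, hc0, hτd, pow_zero]
          rw [h3, h4] at h2
          exact add_right_cancel h2.symm
  -- for each maximal ideal there is `t` with `P t ∉ 𝔪`
  have hmax : ∀ 𝔪 : Ideal M, 𝔪.IsMaximal → ∃ t : M, P t ∉ 𝔪 := by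
    intro 𝔪 hm
    haveI : 𝔪.IsPrime := hm.isPrime
    by_contra hcon
    push_neg at hcon
    -- characters `π ∘ τ^i`
    set π := Ideal.Quotient.mk 𝔪 with hπ
    set χ : Fin d → (M →* M ⧸ 𝔪) := fun i =>
      π.toMonoidHom.comp ((τ ^ (i : ℕ) : M ≃ₐ[F₀] M) : M →* M) with hχ
    have key : ∀ i j : Fin d, (i : ℕ) < (j : ℕ) → χ i = χ j → False := by
      intro i j h hij
      obtain ⟨x, hx⟩ := hdist ((j : ℕ) - (i : ℕ)) (by omega) (by omega) 𝔪 hm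
      apply hx
      have hptw : ∀ z : M, π ((τ ^ (i : ℕ)) z) = π ((τ ^ (j : ℕ)) z) := fun z =>
        DFunLike.congr_fun hij z
      have h2 := hptw ((τ ^ (i : ℕ) : M ≃ₐ[F₀] M).symm x)
      rw [AlgEquiv.apply_symm_apply] at h2
      have hj : (τ ^ (j : ℕ) : M ≃ₐ[F₀] M) ((τ ^ (i : ℕ) : M ≃ₐ[F₀] M).symm x)
          = (τ ^ ((j : ℕ) - (i : ℕ))) x := by
        have he : (τ ^ (j : ℕ) : M ≃ₐ[F₀] M)
            = (τ ^ ((j : ℕ) - (i : ℕ))) * (τ ^ (i : ℕ)) := by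
          rw [← pow_add]; congr 1; omega
        rw [he, AlgEquiv.mul_apply, AlgEquiv.apply_symm_apply]
      rw [hj] at h2
      rw [← Ideal.Quotient.eq_zero_iff_mem, map_sub, ← hπ, ← h2, sub_self]
    have hχinj : Function.Injective χ := by
      intro i j hij
      rcases lt_trichotomy (i : ℕ) (j : ℕ) with h | h | h
      · exact absurd hij (fun hh => key i j h hh)
      · exact Fin.ext h
      · exact absurd hij.symm (fun hh => key j i h hh)
    have hli : LinearIndependent (M ⧸ 𝔪) (fun i : Fin d => (χ i : M → M ⧸ 𝔪)) :=
      (linearIndependent_monoidHom M (M ⧸ 𝔪)).comp χ hχinj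
    have hcoef : ∀ i : Fin d, π (c (i : ℕ)) = 0 := by
      have hz : ∑ i : Fin d, π (c (i : ℕ)) • (χ i : M → M ⧸ 𝔪) = 0 := by
        funext t
        have hPt : π (P t) = 0 := Ideal.Quotient.eq_zero_iff_mem.mpr (hcon t)
        rw [hPapply, map_sum] at hPt
        simp only [map_mul] at hPt
        rw [Finset.sum_range (fun i => π (c i) * π ((τ ^ i) t))] at hPt
        simp only [Finset.sum_apply, Pi.smul_apply, smul_eq_mul, Pi.zero_apply]
        exact hPt
      exact Fintype.linearIndependent_iff.mp hli (fun i => π (c (i : ℕ))) hz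
    have hne : π (c ((⟨0, hd⟩ : Fin d) : ℕ)) ≠ 0 := ((hcunit 0).map π).ne_zero
    exact hne (hcoef ⟨0, hd⟩)
  -- covering argument: find `t` with `P t` outside every maximal ideal
  have hex : ∃ t : M, ∀ 𝔪 : Ideal M, 𝔪.IsMaximal → P t ∉ 𝔪 := by
    by_contra hcon
    push_neg at hcon
    haveI : Finite {I : Ideal M // I.IsMaximal} :=
      (IsArtinianRing.setOfPred_isMaximal_finite M).to_subtype
    set W : {I : Ideal M // I.IsMaximal} → Subspace F₀ M :=
      fun I => Submodule.comap P (I.1.restrictScalars F₀) with hW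
    have hcover : ⋃ I, (W I : Set M) = Set.univ := by
      ext t
      simp only [Set.mem_iUnion, Set.mem_univ, iff_true]
      obtain ⟨𝔪, hm, hmem⟩ := hcon t
      exact ⟨⟨𝔪, hm⟩, hmem⟩
    obtain ⟨I, hI⟩ := Subspace.exists_eq_top_of_iUnion_eq_univ hcover
    obtain ⟨t, ht⟩ := hmax I.1 I.2
    have htI : t ∈ W I := by rw [hI]; trivial
    exact ht htI
  obtain ⟨t, ht⟩ := hex
  have hunit : IsUnit (P t) := by
    by_contra hnu
    obtain ⟨𝔪, hm, hmem⟩ := exists_max_ideal_of_mem_nonunits (mem_nonunits_iff.mpr hnu)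
    exact ht 𝔪 hm hmem
  exact ⟨hunit.unit, by rw [IsUnit.unit_spec]; exact hfix t⟩

set_option maxHeartbeats 1000000 in
/-- **Descent of rank-1 `F`-isocrystals whose Frobenius eigenvalue is a norm.**
Let `q = p^d`, let `Qq` be the unramified (cyclic Galois) extension of `ℚ_p` of degree
`d` with Frobenius generator `σ`, and let `K ⊆ L` be `p`-adic local fields.  Let
`(V, F)` be a rank-1 `F`-isocrystal on `𝔽_q` with coefficients in `L`: `V` is free of
rank 1 over `Qq ⊗[ℚ_p] L` and `F` is a `(σ ⊗ 1)`-semilinear bijection.  Suppose the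
eigenvalue `lam` of the linear map `F^d` lies in `K` and is a norm from
`(Qq ⊗[ℚ_p] K)^*` to `K^*`.  Then `(V, F)` descends to an `F`-isocrystal with
coefficients in `K`: there is a basis vector on which `F` acts by (the image of) an
invertible element of `Qq ⊗[ℚ_p] K`. -/
theorem rank_one_isocrystal_descends
    (p d : ℕ) [Fact p.Prime]
    (Qq : Type*) [Field Qq] [Algebra ℚ_[p] Qq] [IsGalois ℚ_[p] Qq]
    [FiniteDimensional ℚ_[p] Qq] (hdeg : Module.finrank ℚ_[p] Qq = d)
    (σ : Qq ≃ₐ[ℚ_[p]] Qq) (hσ : ∀ h : Qq ≃ₐ[ℚ_[p]] Qq, h ∈ Subgroup.zpowers σ)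
    (K L : Type*) [Field K] [Field L] [Algebra ℚ_[p] K] [Algebra ℚ_[p] L]
    [Algebra K L] [IsScalarTower ℚ_[p] K L]
    (V : Type*) [AddCommGroup V] [Module (Qq ⊗[ℚ_[p]] L) V]
    (b₀ : Module.Basis (Fin 1) (Qq ⊗[ℚ_[p]] L) V)
    (F : V → V)
    (hadd : ∀ x y : V, F (x + y) = F x + F y)
    (hbij : Function.Bijective F)
    (hsemi : ∀ (a : Qq ⊗[ℚ_[p]] L) (v : V),
      F (a • v) = (Algebra.TensorProduct.congr σ (AlgEquiv.refl : L ≃ₐ[ℚ_[p]] L)) a • F v)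
    -- the eigenvalue of `F^d` lies in the subfield `K`
    (lam : K) (hlam : lam ≠ 0)
    (heig : ∀ v : V,
      F^[d] v =
        ((Algebra.TensorProduct.includeRight : L →ₐ[ℚ_[p]] Qq ⊗[ℚ_[p]] L)
          (algebraMap K L lam)) • v)
    -- `lam` is a norm from `(Qq ⊗[ℚ_p] K)^*`
    (hnorm : ∃ a : Qq ⊗[ℚ_[p]] K, IsUnit a ∧
      ∏ i ∈ Finset.range d,
        ((Algebra.TensorProduct.congr σ (AlgEquiv.refl : K ≃ₐ[ℚ_[p]] K)) ^ i) a
        = (Algebra.TensorProduct.includeRight : K →ₐ[ℚ_[p]] Qq ⊗[ℚ_[p]] K) lam) :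
    ∃ (b : Module.Basis (Fin 1) (Qq ⊗[ℚ_[p]] L) V) (c : Qq ⊗[ℚ_[p]] K), IsUnit c ∧
      F (b 0) =
        (Algebra.TensorProduct.map (AlgHom.id ℚ_[p] Qq)
          (IsScalarTower.toAlgHom ℚ_[p] K L)) c • b 0 := by
  classical
  obtain ⟨a, ha, haprod⟩ := hnorm
  -- degree is positive, order of σ
  have hd : 0 < d := hdeg ▸ Module.finrank_pos
  have hcard : Fintype.card (Qq ≃ₐ[ℚ_[p]] Qq) = d := by
    rw [← Nat.card_eq_fintype_card, IsGalois.card_aut_eq_finrank, hdeg]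
  have hord : orderOf σ = d := by
    rw [orderOf_eq_card_of_forall_mem_zpowers hσ, Nat.card_eq_fintype_card, hcard]
  have hσd : σ ^ d = 1 := by rw [← hord]; exact pow_orderOf_eq_one σ
  have hσk : ∀ k, 0 < k → k < d → σ ^ k ≠ 1 := by
    intro k h1 h2 h3
    have hdvd := orderOf_dvd_of_pow_eq_one h3
    rw [hord] at hdvd
    exact absurd (Nat.le_of_dvd h1 hdvd) (by omega)
  -- the semilinear automorphism τ = σ ⊗ 1 of M = Qq ⊗ L
  set τ : (Qq ⊗[ℚ_[p]] L) ≃ₐ[ℚ_[p]] (Qq ⊗[ℚ_[p]] L) :=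
    Algebra.TensorProduct.congr σ (AlgEquiv.refl : L ≃ₐ[ℚ_[p]] L) with hτdef
  set τK : (Qq ⊗[ℚ_[p]] K) ≃ₐ[ℚ_[p]] (Qq ⊗[ℚ_[p]] K) :=
    Algebra.TensorProduct.congr σ (AlgEquiv.refl : K ≃ₐ[ℚ_[p]] K) with hτKdef
  set mapKL : (Qq ⊗[ℚ_[p]] K) →ₐ[ℚ_[p]] (Qq ⊗[ℚ_[p]] L) :=
    Algebra.TensorProduct.map (AlgHom.id ℚ_[p] Qq) (IsScalarTower.toAlgHom ℚ_[p] K L)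
    with hmapdef
  have htm : ∀ (x : Qq) (y : L), τ (x ⊗ₜ[ℚ_[p]] y) = (σ x) ⊗ₜ[ℚ_[p]] y := by
    intro x y
    rw [hτdef]
    simp [Algebra.TensorProduct.congr_apply, Algebra.TensorProduct.map_tmul]
  have hτpow : ∀ (i : ℕ) (x : Qq) (y : L),
      (τ ^ i) (x ⊗ₜ[ℚ_[p]] y) = ((σ ^ i) x) ⊗ₜ[ℚ_[p]] y := by
    intro i
    induction i with
    | zero => intro x y; simp
    | succ n ih =>
      intro x y
      rw [pow_succ, AlgEquiv.mul_apply, htm x y, ih (σ x) y, pow_succ, AlgEquiv.mul_apply]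
  have hτd : τ ^ d = 1 := by
    refine AlgEquiv.ext fun z => ?_
    rw [AlgEquiv.one_apply]
    induction z using TensorProduct.induction_on with
    | zero => simp
    | tmul x y => rw [hτpow d x y, hσd, AlgEquiv.one_apply]
    | add w v hw hv => rw [map_add, hw, hv]
  -- the `hdist` hypothesis for Hilbert 90
  have hdist : ∀ k, 0 < k → k < d → ∀ 𝔪 : Ideal (Qq ⊗[ℚ_[p]] L), 𝔪.IsMaximal →
      ∃ x : Qq ⊗[ℚ_[p]] L, (τ ^ k) x - x ∉ 𝔪 := by
    intro k hk1 hk2 𝔪 hm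
    obtain ⟨q0, hq0⟩ : ∃ q0 : Qq, (σ ^ k) q0 ≠ q0 := by
      by_contra h
      push_neg at h
      exact hσk k hk1 hk2 (AlgEquiv.ext fun q => by rw [h q, AlgEquiv.one_apply])
    refine ⟨q0 ⊗ₜ 1, ?_⟩
    rw [hτpow]
    intro hmem
    rw [← TensorProduct.sub_tmul] at hmem
    have hne : (σ ^ k) q0 - q0 ≠ 0 := sub_ne_zero.mpr hq0
    have hone : (1 : Qq ⊗[ℚ_[p]] L) ∈ 𝔪 := by
      have h2 := 𝔪.mul_mem_left ((((σ ^ k) q0 - q0)⁻¹) ⊗ₜ[ℚ_[p]] (1 : L)) hmem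
      rwa [Algebra.TensorProduct.tmul_mul_tmul, inv_mul_cancel₀ hne, mul_one,
        ← Algebra.TensorProduct.one_def] at h2
    exact hm.ne_top ((Ideal.eq_top_iff_one 𝔪).mpr hone)
  -- instances needed for Hilbert 90
  haveI : Infinite ℚ_[p] := Infinite.of_injective _ (Nat.cast_injective (R := ℚ_[p]))
  haveI : IsArtinianRing (L ⊗[ℚ_[p]] Qq) := IsArtinianRing.of_finite L (L ⊗[ℚ_[p]] Qq)
  haveI : IsArtinianRing (Qq ⊗[ℚ_[p]] L) :=
    (Algebra.TensorProduct.comm ℚ_[p] L Qq).surjective.isArtinianRing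
  haveI : Nontrivial (L ⊗[ℚ_[p]] Qq) := by
    set bb := Algebra.TensorProduct.basis L (Module.finBasisOfFinrankEq ℚ_[p] Qq hdeg)
      with hbb
    refine ⟨bb ⟨0, hd⟩, 0, fun h => ?_⟩
    have h2 := congrArg bb.repr h
    rw [bb.repr_self, map_zero] at h2
    have h3 := DFunLike.congr_fun h2 ⟨0, hd⟩
    simp at h3
  haveI : Nontrivial (Qq ⊗[ℚ_[p]] L) :=
    (Algebra.TensorProduct.comm ℚ_[p] Qq L).toEquiv.nontrivial
  -- basis bookkeeping
  have hrepr : ∀ v : V, (b₀.repr v 0) • b₀ 0 = v := by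
    intro v
    have := b₀.sum_repr v
    rwa [Fin.sum_univ_one] at this
  have hcancel : ∀ x y : Qq ⊗[ℚ_[p]] L, x • b₀ 0 = y • b₀ 0 → x = y := by
    intro x y h
    have h2 := congrArg (fun w => b₀.repr w 0) h
    simpa [Module.Basis.repr_self, Finsupp.smul_apply, smul_eq_mul] using h2
  set u : Qq ⊗[ℚ_[p]] L := b₀.repr (F (b₀ 0)) 0 with hu
  have hFb : F (b₀ 0) = u • b₀ 0 := (hrepr (F (b₀ 0))).symm
  -- u is a unit
  obtain ⟨w, hw⟩ := hbij.2 (b₀ 0)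
  have hw' : F ((b₀.repr w 0) • b₀ 0) = b₀ 0 := by rw [hrepr w, hw]
  have h5 : F ((b₀.repr w 0) • b₀ 0) = (τ (b₀.repr w 0) * u) • b₀ 0 := by
    rw [hsemi, hFb, smul_smul]
  have hone : (τ (b₀.repr w 0) * u) • b₀ 0 = (1 : Qq ⊗[ℚ_[p]] L) • b₀ 0 := by
    rw [← h5, hw', one_smul]
  have huunit : IsUnit u :=
    IsUnit.of_mul_eq_one (a := u) (τ (b₀.repr w 0)) (by rw [mul_comm]; exact hcancel _ _ hone)
  -- iterating F on the basis vector
  have hτsucc : ∀ (z : Qq ⊗[ℚ_[p]] L) (i : ℕ), τ ((τ ^ i) z) = (τ ^ (i + 1)) z := by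
    intro z i
    rw [pow_succ', AlgEquiv.mul_apply]
  have hiter : ∀ n : ℕ,
      F^[n] (b₀ 0) = (∏ i ∈ Finset.range n, (τ ^ i) u) • b₀ 0 := by
    intro n
    induction n with
    | zero => simp
    | succ n ih =>
      rw [Function.iterate_succ_apply', ih, hsemi, hFb, smul_smul]
      congr 1
      rw [map_prod, Finset.prod_range_succ']
      rw [Finset.prod_congr rfl fun i _ => hτsucc u i]
      rw [pow_zero, AlgEquiv.one_apply]
  set lamL : Qq ⊗[ℚ_[p]] L :=
    (Algebra.TensorProduct.includeRight : L →ₐ[ℚ_[p]] Qq ⊗[ℚ_[p]] L)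
      (algebraMap K L lam) with hlamL
  have hNu : ∏ i ∈ Finset.range d, (τ ^ i) u = lamL := by
    refine hcancel _ _ ?_
    rw [← hiter d, heig (b₀ 0)]
  -- compatibility of mapKL with the Frobenii
  have hmapτ : ∀ z : Qq ⊗[ℚ_[p]] K, mapKL (τK z) = τ (mapKL z) := by
    intro z
    induction z using TensorProduct.induction_on with
    | zero => simp
    | tmul x y =>
      rw [hτKdef, hτdef, hmapdef]
      simp [Algebra.TensorProduct.congr_apply, Algebra.TensorProduct.map_tmul,
        IsScalarTower.coe_toAlgHom']
    | add w v hwi hvi => rw [map_add, map_add, hwi, hvi, map_add, map_add]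
  have hmapτi : ∀ (i : ℕ) (z : Qq ⊗[ℚ_[p]] K), mapKL ((τK ^ i) z) = (τ ^ i) (mapKL z) := by
    intro i
    induction i with
    | zero => intro z; simp
    | succ n ih =>
      intro z
      rw [pow_succ, AlgEquiv.mul_apply, ih (τK z), hmapτ z, pow_succ, AlgEquiv.mul_apply]
  set aL : Qq ⊗[ℚ_[p]] L := mapKL a with haLdef
  have haL : IsUnit aL := ha.map mapKL
  have haLprod : ∏ i ∈ Finset.range d, (τ ^ i) aL = lamL := by
    have h2 := congrArg mapKL haprod
    rw [map_prod] at h2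
    calc ∏ i ∈ Finset.range d, (τ ^ i) aL
        = ∏ i ∈ Finset.range d, mapKL ((τK ^ i) a) :=
          Finset.prod_congr rfl fun i _ => (hmapτi i a).symm
      _ = mapKL ((Algebra.TensorProduct.includeRight : K →ₐ[ℚ_[p]] Qq ⊗[ℚ_[p]] K) lam) := h2
      _ = lamL := by
          rw [hlamL, hmapdef]
          simp [Algebra.TensorProduct.includeRight_apply, Algebra.TensorProduct.map_tmul,
            IsScalarTower.coe_toAlgHom']
  -- lamL is a unit
  have hlamLunit : IsUnit lamL := by
    have hLu : (↑(∏ i ∈ Finset.range d,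
        Units.map ((τ ^ i : (Qq ⊗[ℚ_[p]] L) ≃ₐ[ℚ_[p]] (Qq ⊗[ℚ_[p]] L)) :
          (Qq ⊗[ℚ_[p]] L) →* (Qq ⊗[ℚ_[p]] L)) haL.unit) : Qq ⊗[ℚ_[p]] L)
        = ∏ i ∈ Finset.range d, (τ ^ i) aL := by
      rw [← Units.coeHom_apply, map_prod]
      refine Finset.prod_congr rfl fun i _ => ?_
      simp [IsUnit.unit_spec]
    have := (∏ i ∈ Finset.range d,
        Units.map ((τ ^ i : (Qq ⊗[ℚ_[p]] L) ≃ₐ[ℚ_[p]] (Qq ⊗[ℚ_[p]] L)) :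
          (Qq ⊗[ℚ_[p]] L) →* (Qq ⊗[ℚ_[p]] L)) haL.unit).isUnit
    rw [hLu, haLprod] at this
    exact this
  -- the norm-one cocycle
  set A : (Qq ⊗[ℚ_[p]] L)ˣ := haL.unit with hAdef
  set U : (Qq ⊗[ℚ_[p]] L)ˣ := huunit.unit with hUdef
  set g : (Qq ⊗[ℚ_[p]] L)ˣ := U * A⁻¹ with hgdef
  have hAcoe : ((A : (Qq ⊗[ℚ_[p]] L)ˣ) : Qq ⊗[ℚ_[p]] L) = aL := by
    rw [hAdef]; exact IsUnit.unit_spec haL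
  have hUcoe : ((U : (Qq ⊗[ℚ_[p]] L)ˣ) : Qq ⊗[ℚ_[p]] L) = u := by
    rw [hUdef]; exact IsUnit.unit_spec huunit
  have hgcoe : ((g : (Qq ⊗[ℚ_[p]] L)ˣ) : Qq ⊗[ℚ_[p]] L)
      = u * ((A⁻¹ : (Qq ⊗[ℚ_[p]] L)ˣ) : Qq ⊗[ℚ_[p]] L) := by
    rw [hgdef, Units.val_mul, hUcoe]
  have hgaL : ((g : (Qq ⊗[ℚ_[p]] L)ˣ) : Qq ⊗[ℚ_[p]] L) * aL = u := by
    rw [hgcoe, mul_assoc, ← hAcoe, Units.inv_mul, mul_one]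
  have hgnorm : ∏ i ∈ Finset.range d,
      (τ ^ i) ((g : (Qq ⊗[ℚ_[p]] L)ˣ) : Qq ⊗[ℚ_[p]] L) = 1 := by
    have h6 : (∏ i ∈ Finset.range d,
        (τ ^ i) ((g : (Qq ⊗[ℚ_[p]] L)ˣ) : Qq ⊗[ℚ_[p]] L)) * lamL = 1 * lamL := by
      rw [one_mul]
      calc (∏ i ∈ Finset.range d,
          (τ ^ i) ((g : (Qq ⊗[ℚ_[p]] L)ˣ) : Qq ⊗[ℚ_[p]] L)) * lamL
          = (∏ i ∈ Finset.range d,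
              (τ ^ i) ((g : (Qq ⊗[ℚ_[p]] L)ˣ) : Qq ⊗[ℚ_[p]] L)) *
            (∏ i ∈ Finset.range d, (τ ^ i) aL) := by rw [haLprod]
        _ = ∏ i ∈ Finset.range d,
              ((τ ^ i) ((g : (Qq ⊗[ℚ_[p]] L)ˣ) : Qq ⊗[ℚ_[p]] L) * (τ ^ i) aL) :=
            Finset.prod_mul_distrib.symm
        _ = ∏ i ∈ Finset.range d, (τ ^ i) u := by
            refine Finset.prod_congr rfl fun i _ => ?_
            rw [← map_mul, hgaL]
        _ = lamL := hNu
    exact hlamLunit.mul_right_cancel h6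
  obtain ⟨y, hy⟩ := hilbert90_artinian d hd τ hτd hdist g hgnorm
  -- final coefficient identity
  have hcoefeq : τ ((y : Qq ⊗[ℚ_[p]] L)) * u = aL * (y : Qq ⊗[ℚ_[p]] L) := by
    rw [hgcoe] at hy
    have hAA : ((A⁻¹ : (Qq ⊗[ℚ_[p]] L)ˣ) : Qq ⊗[ℚ_[p]] L) *
        ((A : (Qq ⊗[ℚ_[p]] L)ˣ) : Qq ⊗[ℚ_[p]] L) = 1 := A.inv_mul
    rw [← hAcoe]
    linear_combination ((A : (Qq ⊗[ℚ_[p]] L)ˣ) : Qq ⊗[ℚ_[p]] L) * hy -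
      (u * τ ((y : Qq ⊗[ℚ_[p]] L))) * hAA
  -- conclude with the rescaled basis
  refine ⟨b₀.unitsSMul (fun _ => y), a, ha, ?_⟩
  rw [Module.Basis.unitsSMul_apply, Units.smul_def, ← haLdef]
  calc F ((y : Qq ⊗[ℚ_[p]] L) • b₀ 0)
      = τ ((y : Qq ⊗[ℚ_[p]] L)) • (u • b₀ 0) := by rw [hsemi, hFb]
    _ = (τ ((y : Qq ⊗[ℚ_[p]] L)) * u) • b₀ 0 := smul_smul _ _ _
    _ = (aL * (y : Qq ⊗[ℚ_[p]] L)) • b₀ 0 := by rw [hcoefeq]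
    _ = aL • ((y : Qq ⊗[ℚ_[p]] L) • b₀ 0) := (smul_smul _ _ _).symm
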